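/- Let T = T_1 T_2 ⋯ T_z be the LZ77 factorization of T and let i < z. If the factor T_i admits an earlier occurrence starting at a position j with 1 ≤ j ≤ |T_1⋯T_{i−1}| (i.e., a source lying within T), then T_i is a right-maximal substring of T. -/

import Mathlib

/-! Basic definitions: strings are lists of naturals; the separator `#` is `0`;
the alphabet is `Σ = [1..σ]`. Occurrences are taken in the circular version of `T`. -/

noncomputable section
open Classical

/-- `T` is a string over the alphabet `[1..σ]` followed by the separator `# = 0`
(so `#` occurs in `T` exactly once, at the last position). -/
def Wellformed (σ : ℕ) (T : List ℕ) : Prop :=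
  ∃ S : List ℕ, T = S ++ [0] ∧ ∀ c ∈ S, 1 ≤ c ∧ c ≤ σ

/-- The rotation of `T` starting at position `i`. -/
def rot (T : List ℕ) (i : ℕ) : List ℕ := T.drop i ++ T.take i

/-- `W` occurs at position `i` of the circular version of `T`. -/
def CircOccAt (T W : List ℕ) (i : ℕ) : Prop :=
  ∀ j < W.length, W.getD j 0 = T.getD ((i + j) % T.length) 0

/-- `𝒫_T(W)`: the set of starting positions of occurrences of `W` in the circular
version of `T`. -/
def Pset (T W : List ℕ) : Finset ℕ :=
  (Finset.range T.length).filter (fun i => CircOccAt T W i)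

/-- `W` occurs in the circular version of `T`. -/
def OccursCirc (T W : List ℕ) : Prop := (Pset T W).Nonempty

/-- `Σ^ℓ_T(W)`: the set of characters `a` such that `aW` occurs in circular `T`. -/
def SigmaL (T W : List ℕ) : Finset ℕ :=
  T.toFinset.filter (fun a => OccursCirc T (a :: W))

/-- `Σ^r_T(W)`: the set of characters `b` such that `Wb` occurs in circular `T`. -/
def SigmaR (T W : List ℕ) : Finset ℕ :=
  T.toFinset.filter (fun b => OccursCirc T (W ++ [b]))

/-- `W` is left-maximal in `T`. -/
def LeftMaximal (T W : List ℕ) : Prop := 1 < (SigmaL T W).card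

/-- `W` is right-maximal in `T`. -/
def RightMaximal (T W : List ℕ) : Prop := 1 < (SigmaR T W).card

/-- The (finite) collection of substrings of the circular version of `T`. -/
def circSubstrings (T : List ℕ) : Finset (List ℕ) :=
  ((Finset.range T.length) ×ˢ (Finset.range (T.length + 1))).image
    (fun p => (rot T p.1).take p.2)

/-- `ℳ_T`: the set of nonempty maximal repeats of `T`, i.e. repeats that are both
left-maximal and right-maximal.  (Every maximal repeat occurs in circular `T` and has
length at most `|T|`, so it belongs to `circSubstrings T`.) -/
def MaxRepeats (T : List ℕ) : Finset (List ℕ) :=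
  (circSubstrings T).filter
    (fun W => W ≠ [] ∧ 1 < (Pset T W).card ∧ LeftMaximal T W ∧ RightMaximal T W)

/-- Strict lexicographic comparison of strings (a proper prefix is smaller). -/
def lexLt : List ℕ → List ℕ → Bool
  | [], [] => false
  | [], _ :: _ => true
  | _ :: _, [] => false
  | a :: A, b :: B => decide (a < b) || (a == b && lexLt A B)

/-- Non-strict lexicographic comparison. -/
def lexLe (A B : List ℕ) : Bool := !(lexLt B A)

/-- The Burrows–Wheeler transform of `T`: the `i`-th character of `BWT T` is the last
character of the lexicographically `i`-th rotation of `T`. -/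
def BWT (T : List ℕ) : List ℕ :=
  (((List.range T.length).map (rot T)).mergeSort lexLe).map (fun R => R.getLast!)

/-- The number of runs of a string, i.e. the number of maximal intervals on which all
characters are equal. -/
def numRuns : List ℕ → ℕ
  | [] => 0
  | [_] => 1
  | a :: b :: l => (if a = b then 0 else 1) + numRuns (b :: l)


noncomputable section
open Classical

/-- `ℳ^r_T`: the set of rightmost maximal repeats of `T`: maximal repeats `W` such that
no string `WV` with `V` nonempty is left-maximal in `T`. -/
def RightmostMaxRepeats (T : List ℕ) : Finset (List ℕ) :=
  (MaxRepeats T).filter (fun W => ∀ V : List ℕ, V ≠ [] → ¬ LeftMaximal T (W ++ V))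

/-- `Y` is the shortest right-maximal extension of `X` in `T`: the shortest
right-maximal string of `T` having `X` as a prefix. -/
def ShortestRightMaxExt (T X Y : List ℕ) : Prop :=
  X <+: Y ∧ RightMaximal T Y ∧
    ∀ Z : List ℕ, X <+: Z → RightMaximal T Z → Y.length ≤ Z.length

/-- `ℱ^r_T`: pairs `(V, b)` with `V ∈ ℳ_T ∪ {ε}` and `b ∈ Σ^r_T(V)` such that either
`Vb` occurs exactly once in circular `T`, or the shortest right-maximal extension of
`Vb` is not a maximal repeat of `T`.  These pairs correspond to the suffix-tree edges
of `T` from maximal-repeat nodes to non-maximal-repeat nodes. -/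
def Fr (T : List ℕ) : Finset (List ℕ × ℕ) :=
  ((insert ([] : List ℕ) (MaxRepeats T)) ×ˢ T.toFinset).filter
    (fun p => p.2 ∈ SigmaR T p.1 ∧
      ((Pset T (p.1 ++ [p.2])).card = 1 ∨
        ∀ Y : List ℕ, ShortestRightMaxExt T (p.1 ++ [p.2]) Y → Y ∉ MaxRepeats T))

/-- `e_T`: the number of right extensions of maximal repeats of `T`, i.e. the number of
pairs `(V, b)` with `V ∈ ℳ_T ∪ {ε}` and `b ∈ Σ^r_T(V)`.  This equals the number of
arcs of the CDAWG of `T`. -/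
def eCount (T : List ℕ) : ℕ :=
  ∑ V ∈ insert ([] : List ℕ) (MaxRepeats T), (SigmaR T V).card

/-- The next LZ77 factor, to be placed at position `k` of `T`, may be `F` if `F` is a
single character (every single character of `T` has a source among the `σ+1` distinct
characters virtually preceding `T`), or if `F` has an occurrence in `T` starting at a
position `j` strictly before `k`. -/
def LZsource (T : List ℕ) (k : ℕ) (F : List ℕ) : Prop :=
  F.length = 1 ∨ ∃ j, j < k ∧ F <+: T.drop j

/-- `fs` is the LZ77 factorization of `T` (greedy: each factor is the longest prefix of
the remaining suffix admitting a source). -/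
def IsLZ77 (T : List ℕ) (fs : List (List ℕ)) : Prop :=
  fs.flatten = T ∧ (∀ F ∈ fs, F ≠ []) ∧
    ∀ i, (h : i < fs.length) →
      LZsource T ((fs.take i).flatten).length (fs.get ⟨i, h⟩) ∧
      ∀ F' : List ℕ, F' <+: T.drop ((fs.take i).flatten).length →
        (fs.get ⟨i, h⟩).length < F'.length →
          ¬ LZsource T ((fs.take i).flatten).length F'

/-- `N_T(X)`: the number of rotations of `T` lexicographically smaller than `X`. -/
def Nrank (T X : List ℕ) : ℕ :=
  ((List.range T.length).filter (fun i => lexLt (rot T i) X)).length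

/-- The string `a b a² b a³ b ⋯ aˣ b #`. -/
def Tx (a b x : ℕ) : List ℕ :=
  (((List.range x).map (fun i => List.replicate (i + 1) a ++ [b])).flatten) ++ [0]

end

lemma getD_of_prefix {F L : List ℕ} (hp : F <+: L) {j : ℕ} (hj : j < F.length) :
    F.getD j 0 = L.getD j 0 := by
  obtain ⟨t, rfl⟩ := hp
  rw [List.getD_append _ _ _ _ hj]

lemma drop_of_prefix {T F : List ℕ} {p : ℕ} (hpre : F <+: T.drop p) :
    T.drop (p + F.length) = (T.drop p).drop F.length := by
  rw [List.drop_drop]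

lemma prefix_ext {T F : List ℕ} {p : ℕ} (hpre : F <+: T.drop p)
    (hlt : p + F.length < T.length) :
    F ++ [T.getD (p + F.length) 0] <+: T.drop p := by
  obtain ⟨t, ht⟩ := hpre
  have ht2 : t = T.drop (p + F.length) := by
    rw [drop_of_prefix ⟨t, ht⟩, ← ht, List.drop_left]
  have hcons : T.drop (p + F.length) =
      T.getD (p + F.length) 0 :: T.drop (p + F.length + 1) := by
    rw [List.getD_eq_getElem T 0 hlt]
    exact List.drop_eq_getElem_cons hlt
  refine ⟨T.drop (p + F.length + 1), ?_⟩
  rw [← ht, ht2, hcons]; simp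

lemma circ_of_prefix {T W : List ℕ} {p : ℕ} (hpre : W <+: T.drop p)
    (hle : p + W.length ≤ T.length) : CircOccAt T W p := by
  intro m hm
  have h1 : p + m < T.length := by omega
  have h2 : m < (T.drop p).length := by rw [List.length_drop]; omega
  rw [getD_of_prefix hpre hm, Nat.mod_eq_of_lt h1,
    List.getD_eq_getElem _ 0 h2, List.getD_eq_getElem T 0 h1, List.getElem_drop]

lemma mem_SigmaR_of_occ {T F : List ℕ} {p : ℕ} (hpre : F <+: T.drop p)
    (hlt : p + F.length < T.length) :
    T.getD (p + F.length) 0 ∈ SigmaR T F := by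
  have hp : p < T.length := by omega
  refine Finset.mem_filter.mpr ⟨?_, ⟨p, ?_⟩⟩
  · rw [List.mem_toFinset, List.getD_eq_getElem T 0 hlt]
    exact List.getElem_mem _
  · refine Finset.mem_filter.mpr ⟨Finset.mem_range.mpr hp, ?_⟩
    have := circ_of_prefix (prefix_ext hpre hlt) (by simp; omega)
    simpa using this

/-- Let `T = T₁T₂⋯T_z` be the LZ77 factorization of `T`, and let
`i < z`.  If the factor `Tᵢ` admits an earlier occurrence starting at a position
inside `T` (a source lying within `T`), then `Tᵢ` is a right-maximal substring of `T`.
(Factors are 0-indexed here, so `i + 1 < z` expresses that `Tᵢ` is not the last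
factor.) -/
theorem lz_factor_right_maximal (σ : ℕ) (T : List ℕ) (hT : Wellformed σ T)
    (fs : List (List ℕ)) (hfs : IsLZ77 T fs) (i : ℕ) (h : i + 1 < fs.length)
    (hsrc : ∃ j, j < ((fs.take i).flatten).length ∧
      fs.get ⟨i, Nat.lt_of_succ_lt h⟩ <+: T.drop j) :
    RightMaximal T (fs.get ⟨i, Nat.lt_of_succ_lt h⟩) := by
  classical
  obtain ⟨hflat, hne, hmax⟩ := hfs
  set F := fs.get ⟨i, Nat.lt_of_succ_lt h⟩ with hF
  set k := ((fs.take i).flatten).length with hk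
  obtain ⟨j, hjk, hjpre⟩ := hsrc
  have hi : i < fs.length := Nat.lt_of_succ_lt h
  -- T.drop k = F ++ (fs.drop (i+1)).flatten
  have hdropi : fs.drop i = F :: fs.drop (i + 1) := by
    rw [List.drop_eq_getElem_cons hi]; rfl
  have hdropk : T.drop k = F ++ (fs.drop (i + 1)).flatten := by
    have h1 : T = (fs.take i).flatten ++ (fs.drop i).flatten := by
      rw [← List.flatten_append, List.take_append_drop, hflat]
    rw [h1, hk, List.drop_left, hdropi, List.flatten_cons]
  have hFpre : F <+: T.drop k := ⟨(fs.drop (i + 1)).flatten, hdropk.symm⟩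
  -- the rest after factor i is nonempty
  have hR : (fs.drop (i + 1)).flatten ≠ [] := by
    have hdropi1 : fs.drop (i + 1) = fs[i+1] :: fs.drop (i + 2) := by
      rw [List.drop_eq_getElem_cons h]
    rw [hdropi1, List.flatten_cons]
    have : fs[i+1] ≠ [] := hne _ (List.getElem_mem _)
    simp [this]
  have hkF : k + F.length < T.length := by
    have h2 : T.drop (k + F.length) = (fs.drop (i + 1)).flatten := by
      rw [drop_of_prefix hFpre, hdropk, List.drop_left]
    have h3 : 0 < (fs.drop (i + 1)).flatten.length :=
      List.length_pos_iff.mpr hR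
    have h4 := congrArg List.length h2
    rw [List.length_drop] at h4
    omega
  have hFne : F ≠ [] := by rw [hF]; exact hne _ (fs.get_mem _)
  have hFlen : 0 < F.length := List.length_pos_iff.mpr hFne
  -- wellformedness facts
  obtain ⟨S, hTS, hS⟩ := hT
  have hTlen : T.length = S.length + 1 := by rw [hTS]; simp
  have wf_last : T.getD (T.length - 1) 0 = 0 := by
    rw [hTS]; simp [List.getD_append_right, hTlen]
  have wf_pos : ∀ m, m < T.length - 1 → 1 ≤ T.getD m 0 := by
    intro m hm
    rw [hTS] at hm ⊢
    have hm' : m < S.length := by simp at hm; omega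
    rw [List.getD_append _ _ _ _ hm', List.getD_eq_getElem S 0 hm']
    exact (hS _ (List.getElem_mem _)).1
  -- j + |F| < |T|
  have hjn : j + F.length ≤ T.length := by
    have := hjpre.length_le
    rw [List.length_drop] at this
    omega
  have hjF : j + F.length < T.length := by
    by_contra hcon
    have heq : j + F.length = T.length := by omega
    have hlast : F.getD (F.length - 1) 0 = T.getD (j + (F.length - 1)) 0 := by
      have hlt : j + (F.length - 1) < T.length := by omega
      rw [getD_of_prefix hjpre (by omega), List.getD_eq_getElem _ 0
        (by rw [List.length_drop]; omega), List.getD_eq_getElem T 0 hlt,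
        List.getElem_drop]
    have hlastk : F.getD (F.length - 1) 0 = T.getD (k + (F.length - 1)) 0 := by
      have hlt : k + (F.length - 1) < T.length := by omega
      rw [getD_of_prefix hFpre (by omega), List.getD_eq_getElem _ 0
        (by rw [List.length_drop]; omega), List.getD_eq_getElem T 0 hlt,
        List.getElem_drop]
    have h0 : T.getD (j + (F.length - 1)) 0 = 0 := by
      have : j + (F.length - 1) = T.length - 1 := by omega
      rw [this, wf_last]
    have h1 : 1 ≤ T.getD (k + (F.length - 1)) 0 :=
      wf_pos _ (by omega)
    omega
  -- the two extension characters
  set c := T.getD (k + F.length) 0 with hc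
  set d := T.getD (j + F.length) 0 with hd
  have hcd : c ≠ d := by
    intro hcd
    have hext : F ++ [c] <+: T.drop j := by
      rw [hcd]; exact prefix_ext hjpre hjF
    have hsrc' : LZsource T k (F ++ [c]) :=
      Or.inr ⟨j, hjk, hext⟩
    exact (hmax i hi).2 (F ++ [c]) (prefix_ext hFpre hkF)
      (by simp [hF, List.get_eq_getElem]) hsrc' 
  have hcmem : c ∈ SigmaR T F := mem_SigmaR_of_occ hFpre hkF
  have hdmem : d ∈ SigmaR T F := mem_SigmaR_of_occ hjpre hjF
  exact Finset.one_lt_card.mpr ⟨c, hcmem, d, hdmem, hcd⟩
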